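/- Let E, G be Banach lattices of measurable functions (Banach function spaces), T : E → G a linear operator, R : E → G a positive bounded linear operator dominating T (i.e., |Te| ≤ R|e| for all e ∈ E), Y a Banach space, and f₁,…,f_n ∈ E, y₁,…,y_n ∈ Y. Then for almost every point a, ‖∑_{j=1}^n (Tf_j)(a) y_j‖_Y ≤ R(a ↦ ‖∑_{j=1}^n f_j(a) y_j‖_Y)(a); i.e., the pointwise Y-norm of the tensor extension (T ⊗ I_Y)(∑ f_j ⊗ y_j) is dominated pointwise a.e. by R applied to the pointwise Y-norm of ∑ f_j ⊗ y_j. -/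

import Mathlib

open MeasureTheory

/-- A (model of a) Banach function space on a measure space: a Banach lattice `E`
together with an injective lattice-respecting linear embedding `ι` into `L⁰(μ)`
whose range is an order ideal. -/
structure IsBanachFunctionSpace {α : Type*} [MeasurableSpace α] (μ : Measure α)
    (E : Type*) [NormedAddCommGroup E] [Lattice E] [IsOrderedAddMonoid E] [HasSolidNorm E] [NormedSpace ℝ E] [CompleteSpace E]
    (ι : E →ₗ[ℝ] (α →ₘ[μ] ℝ)) : Prop where
  inj : Function.Injective ι
  map_abs : ∀ e : E, ⇑(ι |e|) =ᵐ[μ] fun a => |(ι e) a|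
  ideal : ∀ (f : α →ₘ[μ] ℝ) (e : E), (∀ᵐ a ∂μ, |f a| ≤ |(ι e) a|) → ∃ e' : E, ι e' = f

/-- In a lattice ordered group, `|d| = d` forces `0 ≤ d`. -/
lemma nonneg_of_abs_eq {E : Type*} [Lattice E] [AddCommGroup E]
    [CovariantClass E E (· + ·) (· ≤ ·)] {d : E} (h : |d| = d) : 0 ≤ d := by
  have h2 : |d| - d = 2 • d⁻ := abs_sub_eq_two_nsmul_negPart d
  rw [h, sub_self] at h2
  have hnn : (0 : E) ≤ d⁻ := negPart_nonneg d
  have : d⁻ = 0 := by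
    have : d⁻ ≤ d⁻ + d⁻ := le_add_of_nonneg_right hnn
    rw [show d⁻ + d⁻ = 2 • d⁻ by rw [two_nsmul], ← h2] at this
    exact le_antisymm this hnn
  exact negPart_eq_zero.mp this

/-- Transfer a.e. pointwise nonnegativity to lattice nonnegativity. -/
lemma IsBanachFunctionSpace.nonneg_of_ae {α E : Type*} [MeasurableSpace α] {μ : Measure α}
    [NormedAddCommGroup E] [Lattice E] [IsOrderedAddMonoid E] [HasSolidNorm E] [NormedSpace ℝ E] [CompleteSpace E]
    {ι : E →ₗ[ℝ] (α →ₘ[μ] ℝ)} (h : IsBanachFunctionSpace μ E ι)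
    {d : E} (hd : ∀ᵐ a ∂μ, 0 ≤ (ι d) a) : 0 ≤ d := by
  have h1 : ⇑(ι |d|) =ᵐ[μ] ⇑(ι d) := by
    refine (h.map_abs d).trans ?_
    filter_upwards [hd] with a ha using abs_of_nonneg ha
  exact nonneg_of_abs_eq (h.inj (AEEqFun.ext h1))

/-- Transfer lattice nonnegativity to a.e. pointwise nonnegativity. -/
lemma IsBanachFunctionSpace.ae_nonneg {α E : Type*} [MeasurableSpace α] {μ : Measure α}
    [NormedAddCommGroup E] [Lattice E] [IsOrderedAddMonoid E] [HasSolidNorm E] [NormedSpace ℝ E] [CompleteSpace E]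
    {ι : E →ₗ[ℝ] (α →ₘ[μ] ℝ)} (h : IsBanachFunctionSpace μ E ι)
    {d : E} (hd : 0 ≤ d) : ∀ᵐ a ∂μ, 0 ≤ (ι d) a := by
  have h1 : ⇑(ι |d|) =ᵐ[μ] fun a => |(ι d) a| := h.map_abs d
  rw [abs_of_nonneg hd] at h1
  filter_upwards [h1] with a ha
  rw [ha]; exact abs_nonneg _

/-- Coe of a finite sum of `AEEqFun`s. -/
lemma AEEqFun.coeFn_finset_sum {α : Type*} [MeasurableSpace α] {μ : Measure α}
    {ι : Type*} (s : Finset ι) (F : ι → (α →ₘ[μ] ℝ)) :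
    ⇑(∑ i ∈ s, F i) =ᵐ[μ] fun a => ∑ i ∈ s, (F i) a := by
  classical
  induction s using Finset.induction_on with
  | empty => simp only [Finset.sum_empty]; exact MeasureTheory.AEEqFun.coeFn_zero
  | insert _ _ hi ih =>
    rename_i j s
    rw [Finset.sum_insert hi]
    refine (MeasureTheory.AEEqFun.coeFn_add _ _).trans ?_
    filter_upwards [ih] with a ha
    simp [Finset.sum_insert hi, ha]

/-- Coe of a linear combination through a linear embedding into `L⁰`. -/
lemma coeFn_linear_comb {α E : Type*} [MeasurableSpace α] {μ : Measure α}
    [NormedAddCommGroup E] [Lattice E] [IsOrderedAddMonoid E] [HasSolidNorm E] [NormedSpace ℝ E] [CompleteSpace E]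
    (ι : E →ₗ[ℝ] (α →ₘ[μ] ℝ)) {n : ℕ} (c : Fin n → ℝ) (f : Fin n → E) :
    ⇑(ι (∑ j : Fin n, c j • f j)) =ᵐ[μ] fun a => ∑ j : Fin n, c j * (ι (f j)) a := by
  rw [map_sum]
  refine (AEEqFun.coeFn_finset_sum Finset.univ fun j => ι (c j • f j)).trans ?_
  have : ∀ j : Fin n, ⇑(ι (c j • f j)) =ᵐ[μ] fun a => c j * (ι (f j)) a := by
    intro j
    rw [LinearMap.map_smul]
    filter_upwards [MeasureTheory.AEEqFun.coeFn_smul (c j) (ι (f j))] with a ha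
    simpa [smul_eq_mul] using ha
  filter_upwards [ae_all_iff.mpr this] with a ha
  exact Finset.sum_congr rfl fun j _ => ha j

/-- **Pointwise domination of the tensor extension.** Let `E`, `G` be Banach function
spaces, `T : E → G` linear, `R : E → G` a positive bounded operator dominating `T`
(`|Te| ≤ R|e|`), `Y` a Banach space, `f₁,…,f_n ∈ E`, `y₁,…,y_n ∈ Y`. If `e ∈ E`
represents the function `a ↦ ‖∑ⱼ fⱼ(a) yⱼ‖`, then almost everywhere
`‖∑ⱼ (T fⱼ)(b) yⱼ‖ ≤ (R e)(b)`. -/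
theorem tensor_extension_pointwise_domination
    {α β E G : Type*} [MeasurableSpace α] [MeasurableSpace β]
    {μ : Measure α} {ν : Measure β}
    [NormedAddCommGroup E] [Lattice E] [IsOrderedAddMonoid E] [HasSolidNorm E] [NormedSpace ℝ E] [CompleteSpace E]
    [NormedAddCommGroup G] [Lattice G] [IsOrderedAddMonoid G] [HasSolidNorm G] [NormedSpace ℝ G] [CompleteSpace G]
    (ιE : E →ₗ[ℝ] (α →ₘ[μ] ℝ)) (ιG : G →ₗ[ℝ] (β →ₘ[ν] ℝ))
    (hE : IsBanachFunctionSpace μ E ιE) (hG : IsBanachFunctionSpace ν G ιG)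
    (T : E →ₗ[ℝ] G) (R : E →L[ℝ] G)
    (hRpos : ∀ e : E, 0 ≤ e → 0 ≤ R e)
    (hdom : ∀ e : E, |T e| ≤ R |e|)
    {Y : Type*} [NormedAddCommGroup Y] [NormedSpace ℝ Y]
    {n : ℕ} (f : Fin n → E) (y : Fin n → Y) (e : E)
    (he : (fun a => ‖∑ j : Fin n, (ιE (f j)) a • y j‖) =ᵐ[μ] ⇑(ιE e)) :
    ∀ᵐ b ∂ν, ‖∑ j : Fin n, (ιG (T (f j))) b • y j‖ ≤ (ιG (R e)) b := by
  classical
  -- a countable family of norming functionals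
  have hφ : ∀ c : Fin n → ℚ, ∃ φ : Y →L[ℝ] ℝ, ‖φ‖ ≤ 1 ∧
      φ (∑ j : Fin n, (c j : ℝ) • y j) = ‖∑ j : Fin n, (c j : ℝ) • y j‖ := fun c =>
    exists_dual_vector'' ℝ _
  choose φ hφ1 hφ2 using hφ
  -- the key a.e. estimate for each functional
  have key : ∀ c : Fin n → ℚ, ∀ᵐ b ∂ν,
      |(φ c) (∑ j : Fin n, (ιG (T (f j))) b • y j)| ≤ (ιG (R e)) b := by
    intro c
    set u : E := ∑ j : Fin n, (φ c) (y j) • f j with hu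
    -- |u| ≤ e
    have habs : ∀ᵐ a ∂μ, |(ιE u) a| ≤ (ιE e) a := by
      filter_upwards [coeFn_linear_comb ιE (fun j => (φ c) (y j)) f, he] with a h1 h2
      rw [h1, ← h2]
      have : ∑ j : Fin n, (φ c) (y j) * (ιE (f j)) a
          = (φ c) (∑ j : Fin n, (ιE (f j)) a • y j) := by
        rw [map_sum]
        exact Finset.sum_congr rfl fun j _ => by
          rw [(φ c).map_smul]; simp [smul_eq_mul, mul_comm]
      rw [this]
      calc |(φ c) (∑ j : Fin n, (ιE (f j)) a • y j)|
          ≤ ‖φ c‖ * ‖∑ j : Fin n, (ιE (f j)) a • y j‖ := (φ c).le_opNorm _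
        _ ≤ 1 * ‖∑ j : Fin n, (ιE (f j)) a • y j‖ :=
            mul_le_mul_of_nonneg_right (hφ1 c) (norm_nonneg _)
        _ = ‖∑ j : Fin n, (ιE (f j)) a • y j‖ := one_mul _
    have hule : |u| ≤ e := by
      have : 0 ≤ e - |u| := by
        refine hE.nonneg_of_ae ?_
        have hsub : ⇑(ιE (e - |u|)) =ᵐ[μ] ⇑(ιE e) - ⇑(ιE |u|) := by
          rw [map_sub]; exact MeasureTheory.AEEqFun.coeFn_sub _ _
        filter_upwards [hsub, hE.map_abs u, habs] with a h1 h2 h3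
        rw [h1]; simp only [Pi.sub_apply]
        rw [h2]; linarith
      exact sub_nonneg.mp this
    -- |T u| ≤ R e
    have hTu : |T u| ≤ R e := by
      refine le_trans (hdom u) ?_
      have : 0 ≤ R e - R |u| := by
        rw [← map_sub]
        exact hRpos _ (sub_nonneg.mpr hule)
      exact sub_nonneg.mp this
    -- transfer to a.e. pointwise bound in G
    have hae : ∀ᵐ b ∂ν, |(ιG (T u)) b| ≤ (ιG (R e)) b := by
      have h0 : 0 ≤ R e - |T u| := sub_nonneg.mpr hTu
      have h1 := hG.ae_nonneg h0
      have hsub : ⇑(ιG (R e - |T u|)) =ᵐ[ν] ⇑(ιG (R e)) - ⇑(ιG |T u|) := by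
        rw [map_sub]; exact MeasureTheory.AEEqFun.coeFn_sub _ _
      filter_upwards [h1, hsub, hG.map_abs (T u)] with b hb1 hb2 hb3
      rw [hb2] at hb1; simp only [Pi.sub_apply] at hb1
      rw [hb3] at hb1; linarith
    -- rewrite ιG (T u) pointwise
    have hTucoe : ⇑(ιG (T u)) =ᵐ[ν]
        fun b => (φ c) (∑ j : Fin n, (ιG (T (f j))) b • y j) := by
      have : T u = ∑ j : Fin n, (φ c) (y j) • T (f j) := by
        rw [hu, map_sum]; exact Finset.sum_congr rfl fun j _ => T.map_smul _ _
      rw [this]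
      refine (coeFn_linear_comb ιG (fun j => (φ c) (y j)) (fun j => T (f j))).trans ?_
      refine Filter.Eventually.of_forall fun b => ?_
      show ∑ j : Fin n, (φ c) (y j) * (ιG (T (f j))) b
          = (φ c) (∑ j : Fin n, (ιG (T (f j))) b • y j)
      rw [map_sum]
      exact Finset.sum_congr rfl fun j _ => by
        rw [(φ c).map_smul]; simp [smul_eq_mul, mul_comm]
    filter_upwards [hae, hTucoe] with b hb1 hb2
    rw [← hb2]; exact hb1
  -- combine over the countable family
  have keyall : ∀ᵐ b ∂ν, ∀ c : Fin n → ℚ,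
      |(φ c) (∑ j : Fin n, (ιG (T (f j))) b • y j)| ≤ (ιG (R e)) b :=
    ae_all_iff.mpr key
  filter_upwards [keyall] with b hb
  set v : Y := ∑ j : Fin n, (ιG (T (f j))) b • y j with hv
  -- approximate v by rational combinations
  refine le_of_forall_pos_le_add fun ε hε => ?_
  have hS : (0 : ℝ) < ∑ j : Fin n, ‖y j‖ + 1 := by positivity
  set δ : ℝ := ε / (2 * (∑ j : Fin n, ‖y j‖ + 1)) with hδ
  have hδpos : 0 < δ := by positivity
  have hc : ∃ c : Fin n → ℚ, ∀ j, |(ιG (T (f j))) b - (c j : ℝ)| < δ := by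
    have : ∀ j : Fin n, ∃ q : ℚ, |(ιG (T (f j))) b - (q : ℝ)| < δ := fun j =>
      exists_rat_near _ hδpos
    exact ⟨fun j => (this j).choose, fun j => (this j).choose_spec⟩
  obtain ⟨c, hcj⟩ := hc
  set z : Y := ∑ j : Fin n, (c j : ℝ) • y j with hz
  have hdist : ‖v - z‖ ≤ ε / 2 := by
    have : v - z = ∑ j : Fin n, ((ιG (T (f j))) b - (c j : ℝ)) • y j := by
      rw [hv, hz, ← Finset.sum_sub_distrib]
      exact Finset.sum_congr rfl fun j _ => (sub_smul _ _ _).symm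
    rw [this]
    calc ‖∑ j : Fin n, ((ιG (T (f j))) b - (c j : ℝ)) • y j‖
        ≤ ∑ j : Fin n, ‖((ιG (T (f j))) b - (c j : ℝ)) • y j‖ := norm_sum_le _ _
      _ ≤ ∑ j : Fin n, δ * ‖y j‖ := by
          refine Finset.sum_le_sum fun j _ => ?_
          rw [norm_smul, Real.norm_eq_abs]
          exact mul_le_mul_of_nonneg_right (hcj j).le (norm_nonneg _)
      _ = δ * ∑ j : Fin n, ‖y j‖ := by rw [Finset.mul_sum]
      _ ≤ δ * (∑ j : Fin n, ‖y j‖ + 1) := by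
          refine mul_le_mul_of_nonneg_left (by linarith) hδpos.le
      _ = ε / 2 := by
          rw [hδ]; field_simp
  have h1 : ‖z‖ = (φ c) z := (hφ2 c).symm
  have h2 : (φ c) z ≤ (φ c) v + ‖z - v‖ := by
    have : (φ c) z - (φ c) v = (φ c) (z - v) := (map_sub _ _ _).symm
    have hb2 : (φ c) (z - v) ≤ ‖φ c‖ * ‖z - v‖ := le_trans (le_abs_self _) ((φ c).le_opNorm _)
    have : (φ c) z - (φ c) v ≤ ‖z - v‖ := by
      rw [this]
      calc (φ c) (z - v) ≤ ‖φ c‖ * ‖z - v‖ := hb2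
        _ ≤ 1 * ‖z - v‖ := mul_le_mul_of_nonneg_right (hφ1 c) (norm_nonneg _)
        _ = ‖z - v‖ := one_mul _
    linarith
  have h3 : (φ c) v ≤ (ιG (R e)) b := le_trans (le_abs_self _) (hb c)
  have h4 : ‖z - v‖ = ‖v - z‖ := norm_sub_rev _ _
  calc ‖v‖ ≤ ‖z‖ + ‖v - z‖ := norm_le_norm_add_norm_sub' v z
    _ = (φ c) z + ‖v - z‖ := by rw [h1]
    _ ≤ (φ c) v + ‖z - v‖ + ‖v - z‖ := by linarith
    _ ≤ (ιG (R e)) b + ε / 2 + ε / 2 := by rw [h4]; linarith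
    _ = (ιG (R e)) b + ε := by ring
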